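/- For every n ≥ 2, the rhomboidal C4C8 torus TRC4C8(R)[n,n] is a Cayley graph; specifically, it is isomorphic to a Cayley graph of the group (Cₙ × Cₙ) ⋊ (C₂ × C₂) of order 4n². -/

import Mathlib

abbrev TV (n : ℕ) := ZMod n × ZMod n × Fin 4

def baseRel (n : ℕ) (a b : TV n) : Prop :=
  ∃ j i : ZMod n,
    (a = (j, i, 0) ∧ b = (j, i, 1)) ∨
    (a = (j, i, 0) ∧ b = (j, i, 2)) ∨
    (a = (j, i, 0) ∧ b = (j + 1, i, 3)) ∨
    (a = (j, i, 1) ∧ b = (j, i, 3)) ∨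
    (a = (j, i, 1) ∧ b = (j, i + 1, 2)) ∨
    (a = (j, i, 2) ∧ b = (j, i, 3))

def TRC (n : ℕ) : SimpleGraph (TV n) := SimpleGraph.fromRel (baseRel n)

def g1 (n : ℕ) : Equiv.Perm (TV n) :=
  ⟨fun p => (p.1, p.2.1 - 1, p.2.2), fun p => (p.1, p.2.1 + 1, p.2.2),
   fun p => by simp, fun p => by simp⟩

def g2 (n : ℕ) : Equiv.Perm (TV n) :=
  ⟨fun p => (p.1 + 1, p.2.1, p.2.2), fun p => (p.1 - 1, p.2.1, p.2.2),
   fun p => by simp, fun p => by simp⟩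

def sig : Fin 4 → Fin 4 := ![1, 0, 3, 2]

def g3 (n : ℕ) : Equiv.Perm (TV n) :=
  Function.Involutive.toPerm (fun p => (p.2.1, p.1, sig p.2.2))
    (by rintro ⟨a, b, c⟩; simp only [Prod.mk.injEq]; refine ⟨trivial, trivial, ?_⟩; fin_cases c <;> rfl)

def tau : Fin 4 → Fin 4 := ![3, 2, 1, 0]

def g4 (n : ℕ) : Equiv.Perm (TV n) :=
  Function.Involutive.toPerm (fun p => (1 - p.1, 1 - p.2.1, tau p.2.2))
    (by rintro ⟨a, b, c⟩; simp only [Prod.mk.injEq, sub_sub_cancel]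
        refine ⟨trivial, trivial, ?_⟩; fin_cases c <;> rfl)

/-- The Cayley graph of a group `G` with connection set `S`. -/
def CayleyGraph (G : Type) [Group G] (S : Set G) : SimpleGraph G :=
  SimpleGraph.fromRel (fun g h => ∃ s ∈ S, h = s * g)

open Multiplicative

abbrev Nn (n : ℕ) := Multiplicative (ZMod n) × Multiplicative (ZMod n)
abbrev Kk := Multiplicative (ZMod 2) × Multiplicative (ZMod 2)

def swapA (n : ℕ) : MulAut (Nn n) := MulEquiv.prodComm
def invA (n : ℕ) : MulAut (Nn n) := MulEquiv.inv (Nn n)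

def phiFun (n : ℕ) (k : Kk) : MulAut (Nn n) :=
  (if k.1 = 1 then 1 else swapA n) * (if k.2 = 1 then 1 else invA n)

lemma kcases : ∀ x : Multiplicative (ZMod 2), x = 1 ∨ x = ofAdd 1 := by decide

def phi (n : ℕ) : Kk →* MulAut (Nn n) where
  toFun := phiFun n
  map_one' := by simp [phiFun]
  map_mul' := by
    rintro ⟨x1, x2⟩ ⟨y1, y2⟩
    rcases kcases x1 with h1 | h1 <;> rcases kcases x2 with h2 | h2 <;>
      rcases kcases y1 with h3 | h3 <;> rcases kcases y2 with h4 | h4 <;>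
      subst h1 h2 h3 h4 <;>
      · refine MulEquiv.ext fun z => ?_
        simp [phiFun, swapA, invA, MulAut.mul_apply,
          (by decide : (ofAdd 1 : Multiplicative (ZMod 2)) ≠ 1),
          (by decide : (ofAdd 1 * ofAdd 1 : Multiplicative (ZMod 2)) = 1)]

abbrev Gg (n : ℕ) := Nn n ⋊[phi n] Kk

def k1 : Kk := (ofAdd 1, 1)
def k2 : Kk := (ofAdd 1, ofAdd 1)
def k3 : Kk := (1, ofAdd 1)

lemma phi_k1 (n : ℕ) (a b : Multiplicative (ZMod n)) : phi n k1 (a, b) = (b, a) := by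
  simp [phi, phiFun, k1, swapA, (by decide : (ofAdd 1 : Multiplicative (ZMod 2)) ≠ 1)]
lemma phi_k2 (n : ℕ) (a b : Multiplicative (ZMod n)) : phi n k2 (a, b) = (b⁻¹, a⁻¹) := by
  simp [phi, phiFun, k2, swapA, invA, MulAut.mul_apply,
    (by decide : (ofAdd 1 : Multiplicative (ZMod 2)) ≠ 1)]
lemma phi_k3 (n : ℕ) (a b : Multiplicative (ZMod n)) : phi n k3 (a, b) = (a⁻¹, b⁻¹) := by
  simp [phi, phiFun, k3, invA, (by decide : (ofAdd 1 : Multiplicative (ZMod 2)) ≠ 1)]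

def sg1 (n : ℕ) : Gg n := ⟨(ofAdd 0, ofAdd 0), k1⟩
def sg2 (n : ℕ) : Gg n := ⟨(ofAdd (-1), ofAdd (-1)), k2⟩
def sg3 (n : ℕ) : Gg n := ⟨(ofAdd 0, ofAdd (-1)), k3⟩

def eFun (n : ℕ) (p : TV n) : Gg n :=
  match p with
  | (j, i, ⟨0, _⟩) => ⟨(ofAdd (-j), ofAdd (-i)), 1⟩
  | (j, i, ⟨1, _⟩) => ⟨(ofAdd (-i), ofAdd (-j)), k1⟩
  | (j, i, ⟨2, _⟩) => ⟨(ofAdd (i - 1), ofAdd (j - 1)), k2⟩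
  | (j, i, ⟨3, _⟩) => ⟨(ofAdd (j - 1), ofAdd (i - 1)), k3⟩

def eInv (n : ℕ) (g : Gg n) : TV n :=
  if g.right = 1 then (-toAdd g.left.1, -toAdd g.left.2, 0)
  else if g.right = k1 then (-toAdd g.left.2, -toAdd g.left.1, 1)
  else if g.right = k2 then (toAdd g.left.2 + 1, toAdd g.left.1 + 1, 2)
  else (toAdd g.left.1 + 1, toAdd g.left.2 + 1, 3)

lemma k1ne1 : k1 ≠ 1 := by decide
lemma k2ne1 : k2 ≠ 1 := by decide
lemma k3ne1 : k3 ≠ 1 := by decide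
lemma k2nek1 : k2 ≠ k1 := by decide
lemma k3nek1 : k3 ≠ k1 := by decide
lemma k3nek2 : k3 ≠ k2 := by decide

def ee (n : ℕ) : TV n ≃ Gg n where
  toFun := eFun n
  invFun := eInv n
  left_inv := by
    rintro ⟨j, i, t⟩
    fin_cases t <;>
      simp [eFun, eInv, k1ne1, k2ne1, k3ne1, k2nek1, k3nek1, k3nek2]
  right_inv := by
    rintro ⟨⟨a, b⟩, ⟨x, y⟩⟩
    rcases kcases x with hx | hx <;> rcases kcases y with hy | hy <;> subst hx hy <;>
      simp [eFun, eInv, k1, k2, k3, k1ne1, k2ne1, k3ne1, k2nek1, k3nek1, k3nek2,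
        Prod.ext_iff, (by decide : (ofAdd 1 : Multiplicative (ZMod 2)) ≠ 1),
        (by decide : (1 : Multiplicative (ZMod 2)) ≠ ofAdd 1), Prod.mk_one_one]

section mulcomp
variable (n : ℕ) (j i : ZMod n)

lemma t0s1 : sg1 n * eFun n (j, i, 0) = eFun n (j, i, 1) := by
  refine SemidirectProduct.ext ?_ (by show k1 * 1 = k1; decide)
  show (ofAdd 0, ofAdd 0) * phi n k1 (ofAdd (-j), ofAdd (-i)) = (ofAdd (-i), ofAdd (-j))
  rw [phi_k1]
  simp only [Prod.mk_mul_mk, ← ofAdd_neg, ← ofAdd_add, Prod.mk.injEq]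
  constructor <;> · apply congrArg; ring

lemma t0s2 : sg2 n * eFun n (j, i, 0) = eFun n (j, i, 2) := by
  refine SemidirectProduct.ext ?_ (by show k2 * 1 = k2; decide)
  show (ofAdd (-1), ofAdd (-1)) * phi n k2 (ofAdd (-j), ofAdd (-i)) = (ofAdd (i - 1), ofAdd (j - 1))
  rw [phi_k2]
  simp only [Prod.mk_mul_mk, ← ofAdd_neg, ← ofAdd_add, Prod.mk.injEq]
  constructor <;> · apply congrArg; ring

lemma t0s3 : sg3 n * eFun n (j, i, 0) = eFun n (j + 1, i, 3) := by
  refine SemidirectProduct.ext ?_ (by show k3 * 1 = k3; decide)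
  show (ofAdd 0, ofAdd (-1)) * phi n k3 (ofAdd (-j), ofAdd (-i)) = (ofAdd (j + 1 - 1), ofAdd (i - 1))
  rw [phi_k3]
  simp only [Prod.mk_mul_mk, ← ofAdd_neg, ← ofAdd_add, Prod.mk.injEq]
  constructor <;> · apply congrArg; ring

lemma t1s1 : sg1 n * eFun n (j, i, 1) = eFun n (j, i, 0) := by
  refine SemidirectProduct.ext ?_ (by show k1 * k1 = 1; decide)
  show (ofAdd 0, ofAdd 0) * phi n k1 (ofAdd (-i), ofAdd (-j)) = (ofAdd (-j), ofAdd (-i))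
  rw [phi_k1]
  simp only [Prod.mk_mul_mk, ← ofAdd_neg, ← ofAdd_add, Prod.mk.injEq]
  constructor <;> · apply congrArg; ring

lemma t1s2 : sg2 n * eFun n (j, i, 1) = eFun n (j, i, 3) := by
  refine SemidirectProduct.ext ?_ (by show k2 * k1 = k3; decide)
  show (ofAdd (-1), ofAdd (-1)) * phi n k2 (ofAdd (-i), ofAdd (-j)) = (ofAdd (j - 1), ofAdd (i - 1))
  rw [phi_k2]
  simp only [Prod.mk_mul_mk, ← ofAdd_neg, ← ofAdd_add, Prod.mk.injEq]
  constructor <;> · apply congrArg; ring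

lemma t1s3 : sg3 n * eFun n (j, i, 1) = eFun n (j, i + 1, 2) := by
  refine SemidirectProduct.ext ?_ (by show k3 * k1 = k2; decide)
  show (ofAdd 0, ofAdd (-1)) * phi n k3 (ofAdd (-i), ofAdd (-j)) = (ofAdd (i + 1 - 1), ofAdd (j - 1))
  rw [phi_k3]
  simp only [Prod.mk_mul_mk, ← ofAdd_neg, ← ofAdd_add, Prod.mk.injEq]
  constructor <;> · apply congrArg; ring

lemma t2s1 : sg1 n * eFun n (j, i, 2) = eFun n (j, i, 3) := by
  refine SemidirectProduct.ext ?_ (by show k1 * k2 = k3; decide)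
  show (ofAdd 0, ofAdd 0) * phi n k1 (ofAdd (i - 1), ofAdd (j - 1)) = (ofAdd (j - 1), ofAdd (i - 1))
  rw [phi_k1]
  simp only [Prod.mk_mul_mk, ← ofAdd_neg, ← ofAdd_add, Prod.mk.injEq]
  constructor <;> · apply congrArg; ring

lemma t2s2 : sg2 n * eFun n (j, i, 2) = eFun n (j, i, 0) := by
  refine SemidirectProduct.ext ?_ (by show k2 * k2 = 1; decide)
  show (ofAdd (-1), ofAdd (-1)) * phi n k2 (ofAdd (i - 1), ofAdd (j - 1)) = (ofAdd (-j), ofAdd (-i))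
  rw [phi_k2]
  simp only [Prod.mk_mul_mk, ← ofAdd_neg, ← ofAdd_add, Prod.mk.injEq]
  constructor <;> · apply congrArg; ring

lemma t2s3 : sg3 n * eFun n (j, i, 2) = eFun n (j, i - 1, 1) := by
  refine SemidirectProduct.ext ?_ (by show k3 * k2 = k1; decide)
  show (ofAdd 0, ofAdd (-1)) * phi n k3 (ofAdd (i - 1), ofAdd (j - 1)) = (ofAdd (-(i - 1)), ofAdd (-j))
  rw [phi_k3]
  simp only [Prod.mk_mul_mk, ← ofAdd_neg, ← ofAdd_add, Prod.mk.injEq]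
  constructor <;> · apply congrArg; ring

lemma t3s1 : sg1 n * eFun n (j, i, 3) = eFun n (j, i, 2) := by
  refine SemidirectProduct.ext ?_ (by show k1 * k3 = k2; decide)
  show (ofAdd 0, ofAdd 0) * phi n k1 (ofAdd (j - 1), ofAdd (i - 1)) = (ofAdd (i - 1), ofAdd (j - 1))
  rw [phi_k1]
  simp only [Prod.mk_mul_mk, ← ofAdd_neg, ← ofAdd_add, Prod.mk.injEq]
  constructor <;> · apply congrArg; ring

lemma t3s2 : sg2 n * eFun n (j, i, 3) = eFun n (j, i, 1) := by
  refine SemidirectProduct.ext ?_ (by show k2 * k3 = k1; decide)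
  show (ofAdd (-1), ofAdd (-1)) * phi n k2 (ofAdd (j - 1), ofAdd (i - 1)) = (ofAdd (-i), ofAdd (-j))
  rw [phi_k2]
  simp only [Prod.mk_mul_mk, ← ofAdd_neg, ← ofAdd_add, Prod.mk.injEq]
  constructor <;> · apply congrArg; ring

lemma t3s3 : sg3 n * eFun n (j, i, 3) = eFun n (j - 1, i, 0) := by
  refine SemidirectProduct.ext ?_ (by show k3 * k3 = 1; decide)
  show (ofAdd 0, ofAdd (-1)) * phi n k3 (ofAdd (j - 1), ofAdd (i - 1)) = (ofAdd (-(j - 1)), ofAdd (-i))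
  rw [phi_k3]
  simp only [Prod.mk_mul_mk, ← ofAdd_neg, ← ofAdd_add, Prod.mk.injEq]
  constructor <;> · apply congrArg; ring

end mulcomp

lemma forward (n : ℕ) (a b : TV n) (h : baseRel n a b) :
    eFun n b = sg1 n * eFun n a ∨ eFun n b = sg2 n * eFun n a ∨ eFun n b = sg3 n * eFun n a := by
  obtain ⟨j, i, h⟩ := h
  rcases h with ⟨rfl, rfl⟩ | ⟨rfl, rfl⟩ | ⟨rfl, rfl⟩ | ⟨rfl, rfl⟩ | ⟨rfl, rfl⟩ | ⟨rfl, rfl⟩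
  · exact Or.inl (t0s1 n j i).symm
  · exact Or.inr (Or.inl (t0s2 n j i).symm)
  · exact Or.inr (Or.inr (t0s3 n j i).symm)
  · exact Or.inr (Or.inl (t1s2 n j i).symm)
  · exact Or.inr (Or.inr (t1s3 n j i).symm)
  · exact Or.inl (t2s1 n j i).symm

lemma backward (n : ℕ) (a b : TV n) (s : Gg n)
    (hs : s = sg1 n ∨ s = sg2 n ∨ s = sg3 n) (h : eFun n b = s * eFun n a) :
    baseRel n a b ∨ baseRel n b a := by
  obtain ⟨j, i, t⟩ := a
  have inj : Function.Injective (eFun n) := (ee n).injective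
  fin_cases t <;> rcases hs with rfl | rfl | rfl
  · have h' : eFun n b = eFun n (j, i, 1) := by rw [← t0s1 n j i]; exact h
    rw [inj h']
    exact Or.inl ⟨j, i, Or.inl ⟨rfl, rfl⟩⟩
  · have h' : eFun n b = eFun n (j, i, 2) := by rw [← t0s2 n j i]; exact h
    rw [inj h']
    exact Or.inl ⟨j, i, Or.inr (Or.inl ⟨rfl, rfl⟩)⟩
  · have h' : eFun n b = eFun n (j + 1, i, 3) := by rw [← t0s3 n j i]; exact h
    rw [inj h']
    exact Or.inl ⟨j, i, Or.inr (Or.inr (Or.inl ⟨rfl, rfl⟩))⟩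
  · have h' : eFun n b = eFun n (j, i, 0) := by rw [← t1s1 n j i]; exact h
    rw [inj h']
    exact Or.inr ⟨j, i, Or.inl ⟨rfl, rfl⟩⟩
  · have h' : eFun n b = eFun n (j, i, 3) := by rw [← t1s2 n j i]; exact h
    rw [inj h']
    exact Or.inl ⟨j, i, Or.inr (Or.inr (Or.inr (Or.inl ⟨rfl, rfl⟩)))⟩
  · have h' : eFun n b = eFun n (j, i + 1, 2) := by rw [← t1s3 n j i]; exact h
    rw [inj h']
    exact Or.inl ⟨j, i, Or.inr (Or.inr (Or.inr (Or.inr (Or.inl ⟨rfl, rfl⟩))))⟩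
  · have h' : eFun n b = eFun n (j, i, 3) := by rw [← t2s1 n j i]; exact h
    rw [inj h']
    exact Or.inl ⟨j, i, Or.inr (Or.inr (Or.inr (Or.inr (Or.inr ⟨rfl, rfl⟩))))⟩
  · have h' : eFun n b = eFun n (j, i, 0) := by rw [← t2s2 n j i]; exact h
    rw [inj h']
    exact Or.inr ⟨j, i, Or.inr (Or.inl ⟨rfl, rfl⟩)⟩
  · have h' : eFun n b = eFun n (j, i - 1, 1) := by rw [← t2s3 n j i]; exact h
    rw [inj h']
    refine Or.inr ⟨j, i - 1, Or.inr (Or.inr (Or.inr (Or.inr (Or.inl ⟨rfl, ?_⟩))))⟩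
    rw [sub_add_cancel]
    exact rfl
  · have h' : eFun n b = eFun n (j, i, 2) := by rw [← t3s1 n j i]; exact h
    rw [inj h']
    exact Or.inr ⟨j, i, Or.inr (Or.inr (Or.inr (Or.inr (Or.inr ⟨rfl, rfl⟩))))⟩
  · have h' : eFun n b = eFun n (j, i, 1) := by rw [← t3s2 n j i]; exact h
    rw [inj h']
    exact Or.inr ⟨j, i, Or.inr (Or.inr (Or.inr (Or.inl ⟨rfl, rfl⟩)))⟩
  · have h' : eFun n b = eFun n (j - 1, i, 0) := by rw [← t3s3 n j i]; exact h
    rw [inj h']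
    refine Or.inr ⟨j - 1, i, Or.inr (Or.inr (Or.inl ⟨rfl, ?_⟩))⟩
    rw [sub_add_cancel]
    exact rfl
def Sset (n : ℕ) : Set (Gg n) := {sg1 n, sg2 n, sg3 n}

lemma mem_Sset {n : ℕ} {s : Gg n} : s ∈ Sset n ↔ s = sg1 n ∨ s = sg2 n ∨ s = sg3 n := by
  simp [Sset]

def trcIso (n : ℕ) : TRC n ≃g CayleyGraph (Gg n) (Sset n) where
  toEquiv := ee n
  map_rel_iff' := by
    intro a b
    show (CayleyGraph (Gg n) (Sset n)).Adj (eFun n a) (eFun n b) ↔ (TRC n).Adj a b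
    rw [TRC, CayleyGraph, SimpleGraph.fromRel_adj, SimpleGraph.fromRel_adj]
    constructor
    · rintro ⟨hne, ⟨s, hs, heq⟩ | ⟨s, hs, heq⟩⟩
      · exact ⟨fun h' => hne (by rw [h']),
          backward n a b s (mem_Sset.mp hs) heq⟩
      · exact ⟨fun h' => hne (by rw [h']),
          (backward n b a s (mem_Sset.mp hs) heq).symm⟩
    · rintro ⟨hne, h | h⟩
      · refine ⟨fun h' => hne ((ee n).injective h'), Or.inl ?_⟩
        rcases forward n a b h with h' | h' | h'
        · exact ⟨sg1 n, mem_Sset.mpr (Or.inl rfl), h'⟩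
        · exact ⟨sg2 n, mem_Sset.mpr (Or.inr (Or.inl rfl)), h'⟩
        · exact ⟨sg3 n, mem_Sset.mpr (Or.inr (Or.inr rfl)), h'⟩
      · refine ⟨fun h' => hne ((ee n).injective h'), Or.inr ?_⟩
        rcases forward n b a h with h' | h' | h'
        · exact ⟨sg1 n, mem_Sset.mpr (Or.inl rfl), h'⟩
        · exact ⟨sg2 n, mem_Sset.mpr (Or.inr (Or.inl rfl)), h'⟩
        · exact ⟨sg3 n, mem_Sset.mpr (Or.inr (Or.inr rfl)), h'⟩

lemma sg1_sq (n : ℕ) : sg1 n * sg1 n = 1 := by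
  refine SemidirectProduct.ext ?_ (by show k1 * k1 = 1; decide)
  show (ofAdd 0, ofAdd 0) * phi n k1 (ofAdd 0, ofAdd 0) = 1
  rw [phi_k1]
  simp

lemma sg2_sq (n : ℕ) : sg2 n * sg2 n = 1 := by
  refine SemidirectProduct.ext ?_ (by show k2 * k2 = 1; decide)
  show (ofAdd (-1), ofAdd (-1)) * phi n k2 (ofAdd (-1), ofAdd (-1)) = 1
  rw [phi_k2]
  simp only [Prod.mk_mul_mk, ← ofAdd_neg, ← ofAdd_add, Prod.mk_eq_one, ← ofAdd_zero]
  constructor <;> · apply congrArg; ring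

lemma sg3_sq (n : ℕ) : sg3 n * sg3 n = 1 := by
  refine SemidirectProduct.ext ?_ (by show k3 * k3 = 1; decide)
  show (ofAdd 0, ofAdd (-1)) * phi n k3 (ofAdd 0, ofAdd (-1)) = 1
  rw [phi_k3]
  simp only [Prod.mk_mul_mk, ← ofAdd_neg, ← ofAdd_add, Prod.mk_eq_one, ← ofAdd_zero]
  constructor <;> · apply congrArg; ring

def eqProd (n : ℕ) : Gg n ≃ Nn n × Kk :=
  ⟨fun g => (g.left, g.right), fun p => ⟨p.1, p.2⟩, fun g => by cases g; rfl, fun p => rfl⟩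

/-- For every n ≥ 2, TRC4C8(R)[n,n] is a Cayley graph of a group isomorphic to
(Cₙ × Cₙ) ⋊ (C₂ × C₂), of order 4n². -/
theorem trc_is_cayley (n : ℕ) (hn : 2 ≤ n) :
    ∃ (G : Type) (_ : Group G) (S : Set G)
      (φ : Multiplicative (ZMod 2) × Multiplicative (ZMod 2) →*
        MulAut (Multiplicative (ZMod n) × Multiplicative (ZMod n))),
      (1 : G) ∉ S ∧ (∀ s ∈ S, s⁻¹ ∈ S) ∧
      Nonempty (TRC n ≃g CayleyGraph G S) ∧
      Nonempty (G ≃* (Multiplicative (ZMod n) × Multiplicative (ZMod n)) ⋊[φ]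
        (Multiplicative (ZMod 2) × Multiplicative (ZMod 2))) ∧
      Nat.card G = 4 * n ^ 2 := by
  haveI : NeZero n := ⟨by omega⟩
  refine ⟨Gg n, inferInstance, Sset n, phi n, ?_, ?_, ⟨trcIso n⟩, ⟨MulEquiv.refl _⟩, ?_⟩
  · intro h
    rcases mem_Sset.mp h with h' | h' | h' <;>
    · have := congrArg SemidirectProduct.right h'
      rw [SemidirectProduct.one_right] at this
      simp only [sg1, sg2, sg3] at this
      revert this
      decide
  · intro s hs
    rcases mem_Sset.mp hs with rfl | rfl | rfl
    · rw [inv_eq_of_mul_eq_one_right (sg1_sq n)]; exact mem_Sset.mpr (Or.inl rfl)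
    · rw [inv_eq_of_mul_eq_one_right (sg2_sq n)]; exact mem_Sset.mpr (Or.inr (Or.inl rfl))
    · rw [inv_eq_of_mul_eq_one_right (sg3_sq n)]; exact mem_Sset.mpr (Or.inr (Or.inr rfl))
  · have h1 : Nat.card (Gg n) = Nat.card (Nn n × Kk) := Nat.card_congr (eqProd n)
    have h2 : Nat.card (Multiplicative (ZMod n)) = n := by
      rw [Nat.card_congr (Multiplicative.toAdd : Multiplicative (ZMod n) ≃ ZMod n),
        Nat.card_eq_fintype_card, ZMod.card]
    have h3 : Nat.card (Multiplicative (ZMod 2)) = 2 := by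
      rw [Nat.card_eq_fintype_card]; rfl
    rw [h1, Nat.card_prod, Nat.card_prod, Nat.card_prod, h2, h3]
    ring
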